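/- The interaction term appearing in the derivation of the BMR bracket is given by the following vortex-bracket computation: let f(X) = Σ_{i=1}^N Γ_i Y_i (R²/(X_i² + Y_i²) − 1) and g(X) = Σ_{i=1}^N Γ_i X_i (1 − R²/(X_i² + Y_i²)) on the open set where (X_i, Y_i) ≠ (0, 0) for all i. Then {f, g}_vortex = Σ_{i=1}^N Γ_i ((X_i² + Y_i²)² − R⁴)/(X_i² + Y_i²)² at every point of that set. -/

import Mathlib

/-!
The interaction term appearing in the derivation of the BMR bracket, computed via the
vortex Poisson bracket.
-/

open scoped BigOperators

noncomputable section

variable {N : ℕ}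

/-- `∂f/∂X_i` on the vortex space `ℝ^{2N} = (ℝ²)^N`. -/
def vdX (i : Fin N) (f : (Fin N → ℝ × ℝ) → ℝ) (q : Fin N → ℝ × ℝ) : ℝ :=
  fderiv ℝ f q (Pi.single i (1, 0))

/-- `∂f/∂Y_i` on the vortex space. -/
def vdY (i : Fin N) (f : (Fin N → ℝ × ℝ) → ℝ) (q : Fin N → ℝ × ℝ) : ℝ :=
  fderiv ℝ f q (Pi.single i (0, 1))

/-- The vortex Poisson bracket
`{f, g}_vortex = Σ_i (1/Γ_i)(∂f/∂X_i ∂g/∂Y_i − ∂g/∂X_i ∂f/∂Y_i)`. -/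
def vortexBracket (Γ : Fin N → ℝ) (f g : (Fin N → ℝ × ℝ) → ℝ)
    (q : Fin N → ℝ × ℝ) : ℝ :=
  ∑ i, (1 / Γ i) * (vdX i f q * vdY i g q - vdX i g q * vdY i f q)

private lemma hasF (c R : ℝ) {p : ℝ × ℝ} (hp : p.1 ^ 2 + p.2 ^ 2 ≠ 0) :
    ∃ D : (ℝ × ℝ) →L[ℝ] ℝ, HasFDerivAt
      (fun p : ℝ × ℝ => c * p.2 * (R ^ 2 / (p.1 ^ 2 + p.2 ^ 2) - 1)) D p ∧
      D (1, 0) = -(2 * c * R ^ 2 * p.1 * p.2) / (p.1 ^ 2 + p.2 ^ 2) ^ 2 ∧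
      D (0, 1) = c * (R ^ 2 / (p.1 ^ 2 + p.2 ^ 2) - 1)
        - 2 * c * R ^ 2 * p.2 ^ 2 / (p.1 ^ 2 + p.2 ^ 2) ^ 2 := by
  have hp' : p.1 * p.1 + p.2 * p.2 ≠ 0 := by rwa [← pow_two, ← pow_two]
  have hx : HasFDerivAt (fun p : ℝ × ℝ => p.1) (ContinuousLinearMap.fst ℝ ℝ ℝ) p := hasFDerivAt_fst
  have hy : HasFDerivAt (fun p : ℝ × ℝ => p.2) (ContinuousLinearMap.snd ℝ ℝ ℝ) p := hasFDerivAt_snd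
  have hs := (hx.mul hx).add (hy.mul hy)
  have hinv := (hasFDerivAt_inv' (𝕜 := ℝ) hp').comp p hs
  have h := (hy.const_mul c).mul ((hinv.const_mul (R ^ 2)).sub_const 1)
  refine ⟨_, h.congr_of_eventuallyEq (Filter.Eventually.of_forall
    (fun x : ℝ × ℝ => by
      show c * x.2 * (R ^ 2 / (x.1 ^ 2 + x.2 ^ 2) - 1) = _
      simp [div_eq_mul_inv, pow_two, Function.comp])), ?_, ?_⟩
  · simp
    field_simp
    ring
  · simp
    field_simp
    ring

private lemma hasG (c R : ℝ) {p : ℝ × ℝ} (hp : p.1 ^ 2 + p.2 ^ 2 ≠ 0) :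
    ∃ D : (ℝ × ℝ) →L[ℝ] ℝ, HasFDerivAt
      (fun p : ℝ × ℝ => c * p.1 * (1 - R ^ 2 / (p.1 ^ 2 + p.2 ^ 2))) D p ∧
      D (1, 0) = c * (1 - R ^ 2 / (p.1 ^ 2 + p.2 ^ 2))
        + 2 * c * R ^ 2 * p.1 ^ 2 / (p.1 ^ 2 + p.2 ^ 2) ^ 2 ∧
      D (0, 1) = 2 * c * R ^ 2 * p.1 * p.2 / (p.1 ^ 2 + p.2 ^ 2) ^ 2 := by
  have hp' : p.1 * p.1 + p.2 * p.2 ≠ 0 := by rwa [← pow_two, ← pow_two]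
  have hx : HasFDerivAt (fun p : ℝ × ℝ => p.1) (ContinuousLinearMap.fst ℝ ℝ ℝ) p := hasFDerivAt_fst
  have hy : HasFDerivAt (fun p : ℝ × ℝ => p.2) (ContinuousLinearMap.snd ℝ ℝ ℝ) p := hasFDerivAt_snd
  have hs := (hx.mul hx).add (hy.mul hy)
  have hinv := (hasFDerivAt_inv' (𝕜 := ℝ) hp').comp p hs
  have h := (hx.const_mul c).mul ((hinv.const_mul (R ^ 2)).const_sub 1)
  refine ⟨_, h.congr_of_eventuallyEq (Filter.Eventually.of_forall
    (fun x : ℝ × ℝ => by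
      show c * x.1 * (1 - R ^ 2 / (x.1 ^ 2 + x.2 ^ 2)) = _
      simp [div_eq_mul_inv, pow_two, Function.comp])), ?_, ?_⟩
  · simp
    field_simp
    ring
  · simp
    field_simp
    ring

private lemma fderiv_sum_single {N : ℕ} (F : Fin N → (ℝ × ℝ) → ℝ) (q : Fin N → ℝ × ℝ)
    (hF : ∀ j, DifferentiableAt ℝ (F j) (q j)) (i : Fin N) (v : ℝ × ℝ) :
    fderiv ℝ (fun X : Fin N → ℝ × ℝ => ∑ j, F j (X j)) q (Pi.single i v)
      = fderiv ℝ (F i) (q i) v := by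
  have hcomp : ∀ j, HasFDerivAt (fun X : Fin N → ℝ × ℝ => F j (X j))
      ((fderiv ℝ (F j) (q j)).comp (ContinuousLinearMap.proj j)) q := fun j =>
    (hF j).hasFDerivAt.comp q (hasFDerivAt_apply j q)
  have hsum := HasFDerivAt.fun_sum (fun j (_ : j ∈ Finset.univ) => hcomp j)
  rw [hsum.fderiv, ContinuousLinearMap.sum_apply]
  rw [Finset.sum_eq_single_of_mem i (Finset.mem_univ i)]
  · simp
  · intro j _ hne
    simp [Pi.single_eq_of_ne hne]

private lemma key_arith (R c x y : ℝ) (hc : c ≠ 0) (h : x ^ 2 + y ^ 2 ≠ 0) :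
    1 / c * (-(2 * c * R ^ 2 * x * y) / (x ^ 2 + y ^ 2) ^ 2
        * (2 * c * R ^ 2 * x * y / (x ^ 2 + y ^ 2) ^ 2)
      - (c * (1 - R ^ 2 / (x ^ 2 + y ^ 2)) + 2 * c * R ^ 2 * x ^ 2 / (x ^ 2 + y ^ 2) ^ 2)
        * (c * (R ^ 2 / (x ^ 2 + y ^ 2) - 1) - 2 * c * R ^ 2 * y ^ 2 / (x ^ 2 + y ^ 2) ^ 2))
    = c * ((x ^ 2 + y ^ 2) ^ 2 - R ^ 4) / (x ^ 2 + y ^ 2) ^ 2 := by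
  have h2 : (x ^ 2 + y ^ 2) ^ 2 ≠ 0 := pow_ne_zero _ h
  field_simp
  ring

/-- With `f(X) = Σ_i Γ_i Y_i (R²/(X_i² + Y_i²) − 1)` and
`g(X) = Σ_i Γ_i X_i (1 − R²/(X_i² + Y_i²))`, the vortex bracket is
`{f, g}_vortex = Σ_i Γ_i ((X_i² + Y_i²)² − R⁴)/(X_i² + Y_i²)²` at every point where
no vortex sits at the origin. -/
theorem interaction_term_vortex_bracket {N : ℕ} (hN : 1 ≤ N)
    (Γ : Fin N → ℝ) (hΓ : ∀ i, Γ i ≠ 0) (R : ℝ) (hR : 0 < R)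
    (q : Fin N → ℝ × ℝ) (hq : ∀ i, q i ≠ (0, 0)) :
    vortexBracket Γ
      (fun X => ∑ i, Γ i * (X i).2 * (R ^ 2 / ((X i).1 ^ 2 + (X i).2 ^ 2) - 1))
      (fun X => ∑ i, Γ i * (X i).1 * (1 - R ^ 2 / ((X i).1 ^ 2 + (X i).2 ^ 2)))
      q
      = ∑ i, Γ i * (((q i).1 ^ 2 + (q i).2 ^ 2) ^ 2 - R ^ 4)
          / ((q i).1 ^ 2 + (q i).2 ^ 2) ^ 2 := by
  have hs : ∀ i, (q i).1 ^ 2 + (q i).2 ^ 2 ≠ 0 := by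
    intro i h
    apply hq i
    have h1 : (q i).1 = 0 := by nlinarith [sq_nonneg (q i).1, sq_nonneg (q i).2]
    have h2 : (q i).2 = 0 := by nlinarith [sq_nonneg (q i).1, sq_nonneg (q i).2]
    exact Prod.ext h1 h2
  choose Df hDf hDfX hDfY using fun i => hasF (Γ i) R (hs i)
  choose Dg hDg hDgX hDgY using fun i => hasG (Γ i) R (hs i)
  have ef : ∀ (i : Fin N) (v : ℝ × ℝ),
      fderiv ℝ (fun X : Fin N → ℝ × ℝ =>
        ∑ j, Γ j * (X j).2 * (R ^ 2 / ((X j).1 ^ 2 + (X j).2 ^ 2) - 1)) q (Pi.single i v)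
      = Df i v := by
    intro i v
    rw [fderiv_sum_single
      (fun j (p : ℝ × ℝ) => Γ j * p.2 * (R ^ 2 / (p.1 ^ 2 + p.2 ^ 2) - 1)) q
      (fun j => (hDf j).differentiableAt) i v, (hDf i).fderiv]
  have eg : ∀ (i : Fin N) (v : ℝ × ℝ),
      fderiv ℝ (fun X : Fin N → ℝ × ℝ =>
        ∑ j, Γ j * (X j).1 * (1 - R ^ 2 / ((X j).1 ^ 2 + (X j).2 ^ 2))) q (Pi.single i v)
      = Dg i v := by
    intro i v
    rw [fderiv_sum_single
      (fun j (p : ℝ × ℝ) => Γ j * p.1 * (1 - R ^ 2 / (p.1 ^ 2 + p.2 ^ 2))) q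
      (fun j => (hDg j).differentiableAt) i v, (hDg i).fderiv]
  unfold vortexBracket vdX vdY
  refine Finset.sum_congr rfl (fun i _ => ?_)
  rw [ef i (1, 0), ef i (0, 1), eg i (1, 0), eg i (0, 1),
    hDfX i, hDfY i, hDgX i, hDgY i]
  exact key_arith R (Γ i) (q i).1 (q i).2 (hΓ i) (hs i)


end
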